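/- Let c, a, K_W, κ be reals with K_W > 0, κ > 0, |c| ≤ 1, c ≠ a, h = κ(1 − c²) + K_W(1 − a²), K∞ = (−h + √(h² + 4(c − a)²K_W κ))/(2(c − a)²), and F = c − M(c − a) where M = (K_W + cK∞(c − a))/(κ + K_W + (c − a)²K∞). Then |F| < 1, i.e., the steady-state Kalman filter error dynamics for the IID-input strategy are asymptotically stable. -/

import Mathlib

private lemma aux_stable (c a KW κ K h : ℝ) (hKW : 0 < KW) (hκ : 0 < κ)
    (hK : 0 < K) (hARE : (c - a) ^ 2 * K ^ 2 + h * K - KW * κ = 0)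
    (hh : h = κ * (1 - c ^ 2) + KW * (1 - a ^ 2)) :
    |c - (KW + c * K * (c - a)) / (κ + KW + (c - a) ^ 2 * K) * (c - a)| < 1 := by
  subst hh
  set N : ℝ := KW + c * K * (c - a) with hN
  set D : ℝ := κ + KW + (c - a) ^ 2 * K with hD
  have hDpos : 0 < D := by positivity
  set X : ℝ := c * D - N * (c - a) with hX
  have key : K * (D ^ 2 - X ^ 2) = N ^ 2 * κ + (D - N) ^ 2 * KW := by
    rw [hX, hN, hD]
    linear_combination (κ + KW + (c - a) ^ 2 * K) * hARE
  have hRHS : 0 < N ^ 2 * κ + (D - N) ^ 2 * KW := by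
    rcases eq_or_ne N 0 with h0 | h0
    · rw [h0]
      nlinarith [mul_pos (mul_pos hDpos hDpos) hKW]
    · have hN2 : 0 < N ^ 2 := by positivity
      nlinarith [mul_pos hN2 hκ, mul_nonneg (sq_nonneg (D - N)) hKW.le]
  have hX2 : X ^ 2 < D ^ 2 := by nlinarith [key, hK, hRHS]
  have hFeq : c - N / D * (c - a) = X / D := by
    rw [hX]; field_simp
  rw [hFeq, abs_div, abs_of_pos hDpos, div_lt_one hDpos]
  cases' abs_cases X with hcase hcase <;> nlinarith [hcase.1, hcase.2]

/-- The steady-state Kalman error dynamics of the IID-input strategy are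
asymptotically stable: |F| < 1. -/
theorem nonfeedback_error_dynamics_stable
    (c a KW κ : ℝ) (hKW : 0 < KW) (hκ : 0 < κ) (hc : |c| ≤ 1) (hca : c ≠ a) :
    let h := κ*(1 - c^2) + KW*(1 - a^2)
    let Kinf := (-h + Real.sqrt (h^2 + 4*(c - a)^2*KW*κ)) / (2*(c - a)^2)
    let M := (KW + c*Kinf*(c - a)) / (κ + KW + (c - a)^2*Kinf)
    let F := c - M*(c - a)
    |F| < 1 := by
  intro h Kinf M F
  have hh : h = κ * (1 - c ^ 2) + KW * (1 - a ^ 2) := rfl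
  have hdne : c - a ≠ 0 := sub_ne_zero.mpr hca
  have hd2 : 0 < (c - a) ^ 2 := by positivity
  set δ : ℝ := Real.sqrt (h ^ 2 + 4 * (c - a) ^ 2 * KW * κ) with hδ
  have hΔpos : (0:ℝ) < h ^ 2 + 4 * (c - a) ^ 2 * KW * κ := by positivity
  have hδnn : 0 ≤ δ := Real.sqrt_nonneg _
  have hδ2 : δ ^ 2 = h ^ 2 + 4 * (c - a) ^ 2 * KW * κ := Real.sq_sqrt hΔpos.le
  have hpos : 0 < 4 * (c - a) ^ 2 * KW * κ := by positivity
  have hδgt : h < δ := by nlinarith [hδ2, hpos, hδnn]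
  have hKdef : Kinf = (-h + δ) / (2 * (c - a) ^ 2) := rfl
  have hKpos : 0 < Kinf := by
    rw [hKdef]
    apply div_pos (by linarith) (by positivity)
  have hARE : (c - a) ^ 2 * Kinf ^ 2 + h * Kinf - KW * κ = 0 := by
    rw [hKdef]
    have e : (c - a) ^ 2 * ((-h + δ) / (2 * (c - a) ^ 2)) ^ 2 + h * ((-h + δ) / (2 * (c - a) ^ 2)) - KW * κ
        = (δ ^ 2 - (h ^ 2 + 4 * (c - a) ^ 2 * KW * κ)) / (4 * (c - a) ^ 2) := by
      field_simp
      ring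
    rw [e, hδ2, sub_self, zero_div]
  show |c - (KW + c * Kinf * (c - a)) / (κ + KW + (c - a) ^ 2 * Kinf) * (c - a)| < 1
  exact aux_stable c a KW κ Kinf h hKW hκ hKpos hARE hh
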